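/- If ρ is a separable bipartite density matrix, then the negativity-based quantity max{‖ρ^{T₁}‖₁ − 1, ‖ρ^{T₂}‖₁ − 1} equals 0. Consequently, if this quantity is strictly positive, ρ is entangled (not separable). -/

import Mathlib

open Matrix
open scoped Kronecker Classical ComplexOrder

noncomputable section

/-- A density matrix: positive semidefinite with unit trace. -/
def IsDensity {N : Type*} [Fintype N] (ρ : Matrix N N ℂ) : Prop :=
  ρ.PosSemidef ∧ ρ.trace = 1

/-- Outer product `|ψ⟩⟨ψ|`. -/
def outer {N : Type*} (ψ : N → ℂ) : Matrix N N ℂ :=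
  Matrix.of fun i j => ψ i * star (ψ j)

/-- Squared norm of a vector. -/
def vnormSq {N : Type*} [Fintype N] (ψ : N → ℂ) : ℝ := ∑ x, ‖ψ x‖ ^ 2

/-- Partial transpose with respect to the first tensor factor. -/
def pt₁ {m n : Type*} (ρ : Matrix (m × n) (m × n) ℂ) : Matrix (m × n) (m × n) ℂ :=
  Matrix.of fun p q => ρ (q.1, p.2) (p.1, q.2)

/-- Partial transpose with respect to the second tensor factor. -/
def pt₂ {m n : Type*} (ρ : Matrix (m × n) (m × n) ℂ) : Matrix (m × n) (m × n) ℂ :=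
  Matrix.of fun p q => ρ (p.1, q.2) (q.1, p.2)

/-- Partial trace over the first tensor factor. -/
def ptr₁ {m n : Type*} [Fintype m] (ρ : Matrix (m × n) (m × n) ℂ) : Matrix n n ℂ :=
  Matrix.of fun j l => ∑ i, ρ (i, j) (i, l)

/-- Partial trace over the second tensor factor. -/
def ptr₂ {m n : Type*} [Fintype n] (ρ : Matrix (m × n) (m × n) ℂ) : Matrix m m ℂ :=
  Matrix.of fun i k => ∑ j, ρ (i, j) (k, j)

/-- Trace norm (sum of singular values): `‖A‖₁ = tr √(AᴴA)`. -/
def traceNorm {N : Type*} [Fintype N] [DecidableEq N] (A : Matrix N N ℂ) : ℝ :=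
  (((Matrix.posSemidef_conjTranspose_mul_self A).1.eigenvectorUnitary : Matrix N N ℂ) *
    diagonal (((↑) : ℝ → ℂ) ∘ Real.sqrt ∘ (Matrix.posSemidef_conjTranspose_mul_self A).1.eigenvalues) *
    (star ((Matrix.posSemidef_conjTranspose_mul_self A).1.eigenvectorUnitary : Matrix N N ℂ))).trace.re

/-- Purity `tr ρ²` (real part). -/
def purity {N : Type*} [Fintype N] (ρ : Matrix N N ℂ) : ℝ := ((ρ * ρ).trace).re

/-- Separability of a bipartite density matrix. -/
def Separable {m n : Type*} [Fintype m] [Fintype n]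
    (ρ : Matrix (m × n) (m × n) ℂ) : Prop :=
  ∃ (k : ℕ) (p : Fin k → ℝ) (σ : Fin k → Matrix m m ℂ) (τ : Fin k → Matrix n n ℂ),
    (∀ i, 0 ≤ p i) ∧ (∑ i, p i = 1) ∧ (∀ i, IsDensity (σ i)) ∧ (∀ i, IsDensity (τ i)) ∧
    ρ = ∑ i, (p i : ℂ) • (σ i ⊗ₖ τ i)

/-- Extension `E ⊗ id` of a map on the first factor to a bipartite space. -/
def tensExtA {s n : Type*} (E : Matrix s s ℂ → Matrix s s ℂ)
    (X : Matrix (s × n) (s × n) ℂ) : Matrix (s × n) (s × n) ℂ :=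
  Matrix.of fun p q => E (Matrix.of fun i k => X (i, p.2) (k, q.2)) p.1 q.1

/-- Extension `id ⊗ A` of a map on the second factor to a bipartite space. -/
def tensExtSys {e s : Type*} (A : Matrix s s ℂ → Matrix s s ℂ)
    (X : Matrix (e × s) (e × s) ℂ) : Matrix (e × s) (e × s) ℂ :=
  Matrix.of fun p q => A (Matrix.of fun i k => X (p.1, i) (q.1, k)) p.2 q.2

/-- Complete positivity: `E ⊗ id_n` maps PSD matrices to PSD matrices for every `n`. -/
def IsCP {s : Type*} [Fintype s] (E : Matrix s s ℂ → Matrix s s ℂ) : Prop :=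
  ∀ (n : ℕ) (X : Matrix (s × Fin n) (s × Fin n) ℂ), X.PosSemidef → (tensExtA E X).PosSemidef

/-- Trace preservation. -/
def IsTP {s : Type*} [Fintype s] (E : Matrix s s ℂ → Matrix s s ℂ) : Prop :=
  ∀ X, (E X).trace = X.trace

/-- The maximally entangled unit vector `|Ψ⁺⟩ = (1/√d) Σᵢ |i⟩⊗|i⟩`. -/
def maxEntVec (d : ℕ) : Fin d × Fin d → ℂ :=
  fun p => if p.1 = p.2 then (((Real.sqrt d)⁻¹ : ℝ) : ℂ) else 0

/-- The Choi state `χ[E] = (E ⊗ id)(|Ψ⁺⟩⟨Ψ⁺|)` of a map `E`. -/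
def ChoiMap {d : ℕ} (E : Matrix (Fin d) (Fin d) ℂ → Matrix (Fin d) (Fin d) ℂ) :
    Matrix (Fin d × Fin d) (Fin d × Fin d) ℂ :=
  tensExtA E (outer (maxEntVec d))

/-- Choi state of a single-intervention process tensor `T`, viewed as a function of the
initial system state and the intervention (a CP map). The first index pair is the first
time segment (intervention input leg, initial state leg), the second pair is the second
time segment (final state leg, intervention output leg). It is obtained by letting `T`
act on halves of maximally entangled pairs, i.e. on matrix units with `1/d` weights. -/
def ChoiPT {d : ℕ}
    (T : Matrix (Fin d) (Fin d) ℂ →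
      (Matrix (Fin d) (Fin d) ℂ → Matrix (Fin d) (Fin d) ℂ) → Matrix (Fin d) (Fin d) ℂ) :
    Matrix ((Fin d × Fin d) × (Fin d × Fin d)) ((Fin d × Fin d) × (Fin d × Fin d)) ℂ :=
  Matrix.of fun p q => (d : ℂ)⁻¹ * (d : ℂ)⁻¹ *
    (T (Matrix.single p.1.2 q.1.2 1)
       (fun ρ => ρ p.1.1 q.1.1 • Matrix.single p.2.2 q.2.2 1)) p.2.1 q.2.1

/-- A single-intervention process tensor has classical memory if it is a composition of
conditioned instruments: `T[ρ, A] = Σᵢ Φᵢ(A(Iᵢ(ρ)))` with `{Iᵢ}` a quantum instrument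
(each `Iᵢ` CP, their sum trace preserving) and each `Φᵢ` a CPT map. -/
def HasClassicalMemory {d : ℕ}
    (T : Matrix (Fin d) (Fin d) ℂ →
      (Matrix (Fin d) (Fin d) ℂ → Matrix (Fin d) (Fin d) ℂ) → Matrix (Fin d) (Fin d) ℂ) :
    Prop :=
  ∃ (k : ℕ) (I Φ : Fin k → (Matrix (Fin d) (Fin d) ℂ → Matrix (Fin d) (Fin d) ℂ)),
    (∀ i, IsLinearMap ℂ (I i)) ∧ (∀ i, IsCP (I i)) ∧ IsTP (fun ρ => ∑ i, I i ρ) ∧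
    (∀ i, IsLinearMap ℂ (Φ i)) ∧ (∀ i, IsCP (Φ i)) ∧ (∀ i, IsTP (Φ i)) ∧
    (∀ ρ A, T ρ A = ∑ i, Φ i (A (I i ρ)))

/-- Action of a Kraus operator on the first factor of a bipartite vector: `(L ⊗ I)ψ`. -/
def lact {m n : Type*} [Fintype m] (L : Matrix m m ℂ) (ψ : m × n → ℂ) : m × n → ℂ :=
  fun p => ∑ i, L p.1 i * ψ (i, p.2)

/-- Concurrence of a pure bipartite state: `C(ψ) = √(2(1 − tr((tr₂|ψ⟩⟨ψ|)²)))`. -/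
def concPure {m n : Type*} [Fintype m] [Fintype n] (ψ : m × n → ℂ) : ℝ :=
  Real.sqrt (2 * (1 - purity (ptr₂ (outer ψ))))

/-- The set of average values `Σₖ pₖ f(ψₖ)` over all pure-state decompositions of `ρ`. -/
def decompAvgs {m n : Type*} [Fintype m] [Fintype n]
    (f : (m × n → ℂ) → ℝ) (ρ : Matrix (m × n) (m × n) ℂ) : Set ℝ :=
  { r | ∃ (k : ℕ) (p : Fin k → ℝ) (ψ : Fin k → m × n → ℂ),
      (∀ i, 0 < p i) ∧ (∑ i, p i = 1) ∧ (∀ i, vnormSq (ψ i) = 1) ∧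
      (ρ = ∑ i, (p i : ℂ) • outer (ψ i)) ∧ r = ∑ i, p i * f (ψ i) }

/-- An entanglement monotone: a nonnegative function of pure bipartite states whose
average does not increase under local CP operations (given by Kraus operators) on the
system (first) factor. -/
def IsEntMonotone {m n : Type*} [Fintype m] [Fintype n] (f : (m × n → ℂ) → ℝ) : Prop :=
  (∀ ψ, 0 ≤ f ψ) ∧
  ∀ (k : ℕ) (L : Fin k → Matrix m m ℂ), (∑ j, (L j)ᴴ * L j) = 1 →
    ∀ ψ : m × n → ℂ, vnormSq ψ = 1 →
      (∑ j, if vnormSq (lact (L j) ψ) = 0 then 0 else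
        vnormSq (lact (L j) ψ) *
          f (fun x => (((Real.sqrt (vnormSq (lact (L j) ψ)))⁻¹ : ℝ) : ℂ) * lact (L j) ψ x))
        ≤ f ψ

end


section Aux
open Matrix
open scoped Kronecker ComplexOrder
open scoped MatrixOrder

private lemma kron_conjT {m n : Type*} (A : Matrix m m ℂ) (B : Matrix n n ℂ) :
    (A ⊗ₖ B)ᴴ = Aᴴ ⊗ₖ Bᴴ := by
  ext p q
  simp [Matrix.conjTranspose_apply, mul_comm]

private lemma kron_psd {m n : Type*} [Fintype m] [Fintype n]
    {σ : Matrix m m ℂ} {τ : Matrix n n ℂ}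
    (hσ : σ.PosSemidef) (hτ : τ.PosSemidef) : (σ ⊗ₖ τ).PosSemidef := by
  exact hσ.kronecker hτ

private lemma smul_psd {N : Type*} [Fintype N] {M : Matrix N N ℂ} (hM : M.PosSemidef)
    {c : ℝ} (hc : 0 ≤ c) : ((c : ℂ) • M).PosSemidef := by
  constructor
  · unfold Matrix.IsHermitian
    rw [Matrix.conjTranspose_smul, hM.1]
    congr 1
    simp [Complex.star_def, Complex.conj_ofReal]
  · intro x
    exact (hM.smul (a := (c : ℂ)) (by exact_mod_cast hc)).2 x

private lemma sum_psd {k : ℕ} {N : Type*} [Fintype N] (f : Fin k → Matrix N N ℂ)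
    (h : ∀ i, (f i).PosSemidef) : (∑ i, f i).PosSemidef :=
  Finset.sum_induction f _ (fun _ _ ha hb => ha.add hb) (Matrix.PosSemidef.zero)
    (fun i _ => h i)

private lemma traceNorm_psd {N : Type*} [Fintype N] [DecidableEq N] {A : Matrix N N ℂ}
    (hA : A.PosSemidef) : traceNorm A = A.trace.re := by
  have h2 : A ^ 2 = Aᴴ * A := by rw [pow_two, hA.1]
  have hH := (Matrix.posSemidef_conjTranspose_mul_self A).1
  have h0 : (0 : Matrix N N ℂ) ≤ A := hA.nonneg
  have hAA : Aᴴ * A = A * A := by rw [hA.1]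
  have key : ((hH.eigenvectorUnitary : Matrix N N ℂ) *
      diagonal (((↑) : ℝ → ℂ) ∘ Real.sqrt ∘ hH.eigenvalues) *
      star (hH.eigenvectorUnitary : Matrix N N ℂ)) = A := by
    show hH.cfc Real.sqrt = A
    rw [← hH.cfc_eq, ← cfcₙ_eq_cfc, hAA, ← CFC.sqrt_eq_real_sqrt (A * A)
      (by rw [← hAA]; exact (Matrix.posSemidef_conjTranspose_mul_self A).nonneg),
      CFC.sqrt_mul_self A]
  unfold traceNorm
  rw [key]

private lemma pt1_kron {m n : Type*} (σ : Matrix m m ℂ) (τ : Matrix n n ℂ) :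
    pt₁ (σ ⊗ₖ τ) = σᵀ ⊗ₖ τ := rfl

private lemma pt2_kron {m n : Type*} (σ : Matrix m m ℂ) (τ : Matrix n n ℂ) :
    pt₂ (σ ⊗ₖ τ) = σ ⊗ₖ τᵀ := rfl

private lemma pt1_sum_smul {m n : Type*} {k : ℕ} (c : Fin k → ℂ)
    (M : Fin k → Matrix (m × n) (m × n) ℂ) :
    pt₁ (∑ i, c i • M i) = ∑ i, c i • pt₁ (M i) := by
  ext p q
  simp [pt₁, Matrix.sum_apply]

private lemma pt2_sum_smul {m n : Type*} {k : ℕ} (c : Fin k → ℂ)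
    (M : Fin k → Matrix (m × n) (m × n) ℂ) :
    pt₂ (∑ i, c i • M i) = ∑ i, c i • pt₂ (M i) := by
  ext p q
  simp [pt₂, Matrix.sum_apply]

private lemma trace_pt1 {m n : Type*} [Fintype m] [Fintype n]
    (ρ : Matrix (m × n) (m × n) ℂ) : (pt₁ ρ).trace = ρ.trace := by
  simp [Matrix.trace, pt₁, Matrix.diag]

private lemma trace_pt2 {m n : Type*} [Fintype m] [Fintype n]
    (ρ : Matrix (m × n) (m × n) ℂ) : (pt₂ ρ).trace = ρ.trace := by
  simp [Matrix.trace, pt₂, Matrix.diag]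

end Aux

/-- for separable ρ the negativity-based quantity vanishes; consequently,
if it is strictly positive then ρ is entangled. -/
theorem stmt2 {m n : Type*} [Fintype m] [Fintype n] [DecidableEq m] [DecidableEq n]
    (ρ : Matrix (m × n) (m × n) ℂ) (hρ : IsDensity ρ) :
    (Separable ρ → max (traceNorm (pt₁ ρ) - 1) (traceNorm (pt₂ ρ) - 1) = 0) ∧
    (0 < max (traceNorm (pt₁ ρ) - 1) (traceNorm (pt₂ ρ) - 1) → ¬ Separable ρ) := by
  have key : Separable ρ →
      max (traceNorm (pt₁ ρ) - 1) (traceNorm (pt₂ ρ) - 1) = 0 := by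
    rintro ⟨k, p, σ, τ, hp, hps, hσ, hτ, hρeq⟩
    have h1 : (pt₁ ρ).PosSemidef := by
      rw [hρeq, pt1_sum_smul]
      exact sum_psd _ fun i => by
        rw [pt1_kron]
        exact smul_psd (kron_psd (hσ i).1.transpose (hτ i).1) (hp i)
    have h2 : (pt₂ ρ).PosSemidef := by
      rw [hρeq, pt2_sum_smul]
      exact sum_psd _ fun i => by
        rw [pt2_kron]
        exact smul_psd (kron_psd (hσ i).1 (hτ i).1.transpose) (hp i)
    have ht1 : traceNorm (pt₁ ρ) = 1 := by
      rw [traceNorm_psd h1, trace_pt1, hρ.2]; simp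
    have ht2 : traceNorm (pt₂ ρ) = 1 := by
      rw [traceNorm_psd h2, trace_pt2, hρ.2]; simp
    rw [ht1, ht2]; simp
  refine ⟨key, fun hpos hsep => ?_⟩
  rw [key hsep] at hpos
  exact lt_irrefl 0 hpos
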